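/- Differentiation of the square-root Abel kernel: let 0 < E₀ and let g be continuous on [E₀, E₁] for some E₁ > E₀. Then the function F(E) = ∫_{E₀}^{E} √((E−u)/u) · g(u) du is differentiable on (E₀, E₁) with F′(E) = (1/2) ∫_{E₀}^{E} g(u) / √(u(E−u)) du. -/

import Mathlib

open Set MeasureTheory Filter Topology intervalIntegral

/-- `1/√x = x^(-1/2)` for every real `x` (both sides vanish for `x ≤ 0`). -/
theorem one_div_sqrt_eq_rpow_neg_half (x : ℝ) : 1 / Real.sqrt x = x ^ (-(1/2) : ℝ) := by
  rcases lt_trichotomy x 0 with h | h | h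
  · rw [Real.sqrt_eq_zero_of_nonpos h.le, Real.rpow_def_of_neg h]
    have h2 : Real.cos (2⁻¹ * Real.pi) = 0 := by
      rw [show (2⁻¹ : ℝ) * Real.pi = Real.pi/2 by ring, Real.cos_pi_div_two]
    simp [h2]
  · simp [h]
  · rw [Real.rpow_neg h.le, ← Real.sqrt_eq_rpow, one_div]

/-- AM–GM for square roots. -/
theorem sqrt_amgm {x y : ℝ} (hx : 0 ≤ x) (hy : 0 ≤ y) :
    Real.sqrt (x * y) ≤ (x + y) / 2 := by
  have h1 : Real.sqrt (x * y) ≤ Real.sqrt (((x + y) / 2) ^ 2) :=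
    Real.sqrt_le_sqrt (by nlinarith [sq_nonneg (x - y)])
  rwa [Real.sqrt_sq (by positivity)] at h1

/-- Hölder-type estimate for square roots: `|√a − √b| ≤ |a − b| / √|b|`. -/
theorem sqrt_diff_bound (a b : ℝ) (hb : b ≠ 0) :
    |Real.sqrt a - Real.sqrt b| ≤ |a - b| / Real.sqrt |b| := by
  have hbpos : 0 < Real.sqrt |b| := Real.sqrt_pos.2 (abs_pos.2 hb)
  rw [le_div_iff₀ hbpos]
  rcases lt_or_gt_of_ne hb with hb0 | hb0
  · rw [Real.sqrt_eq_zero_of_nonpos hb0.le, sub_zero, abs_of_nonneg (Real.sqrt_nonneg a),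
      abs_of_neg hb0]
    rcases le_or_gt a 0 with ha | ha
    · rw [Real.sqrt_eq_zero_of_nonpos ha, zero_mul]
      positivity
    · have h1 : Real.sqrt a * Real.sqrt (-b) = Real.sqrt (a * (-b)) :=
        (Real.sqrt_mul ha.le _).symm
      rw [h1]
      have h2 : Real.sqrt (a * (-b)) ≤ (a + (-b)) / 2 := sqrt_amgm ha.le (by linarith)
      have h3 : |a - b| = a - b := abs_of_pos (by linarith)
      linarith
  · rw [abs_of_pos hb0]
    rcases le_or_gt a 0 with ha | ha
    · rw [Real.sqrt_eq_zero_of_nonpos ha, zero_sub, abs_neg,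
        abs_of_nonneg (Real.sqrt_nonneg b), Real.mul_self_sqrt hb0.le,
        abs_of_nonpos (by linarith : a - b ≤ 0)]
      linarith
    · have key : |Real.sqrt a - Real.sqrt b| * (Real.sqrt a + Real.sqrt b) = |a - b| := by
        have hmul : (Real.sqrt a - Real.sqrt b) * (Real.sqrt a + Real.sqrt b) = a - b := by
          have h1 := Real.mul_self_sqrt ha.le
          have h2 := Real.mul_self_sqrt hb0.le
          ring_nf
          nlinarith [h1, h2]
        calc |Real.sqrt a - Real.sqrt b| * (Real.sqrt a + Real.sqrt b)
            = |(Real.sqrt a - Real.sqrt b) * (Real.sqrt a + Real.sqrt b)| := by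
              rw [abs_mul, abs_of_nonneg (by positivity : (0:ℝ) ≤ Real.sqrt a + Real.sqrt b)]
          _ = |a - b| := by rw [hmul]
      have h4 : Real.sqrt b ≤ Real.sqrt a + Real.sqrt b :=
        le_add_of_nonneg_left (Real.sqrt_nonneg a)
      nlinarith [abs_nonneg (Real.sqrt a - Real.sqrt b), key]

/-- Differentiation of the square-root Abel kernel:
`F(E) = ∫_{E₀}^E √((E−u)/u) g(u) du` has
`F′(E) = (1/2) ∫_{E₀}^E g(u)/√(u(E−u)) du`. -/
theorem deriv_sqrt_abel_kernel (E₀ E₁ : ℝ) (hE₀ : 0 < E₀) (hE : E₀ < E₁)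
    (g : ℝ → ℝ) (hg : ContinuousOn g (Icc E₀ E₁)) :
    ∀ E ∈ Ioo E₀ E₁,
      HasDerivAt (fun e => ∫ u in E₀..e, Real.sqrt ((e - u) / u) * g u)
        ((1/2) * ∫ u in E₀..E, g u / Real.sqrt (u * (E - u))) E := by
  rintro E ⟨hE1, hE2⟩
  set c : ℝ := (E + E₁) / 2 with hc
  have hEc : E < c := by simp only [hc]; linarith
  have hcE₁ : c < E₁ := by simp only [hc]; linarith
  have hE₀c : E₀ < c := lt_trans hE1 hEc
  have hsub : Icc E₀ c ⊆ Icc E₀ E₁ := Icc_subset_Icc le_rfl hcE₁.le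
  have hgc : ContinuousOn g (Icc E₀ c) := hg.mono hsub
  -- bound on g
  obtain ⟨M, hM⟩ := (isCompact_Icc : IsCompact (Icc E₀ c)).exists_bound_of_continuousOn hgc
  have hM0 : 0 ≤ M := le_trans (norm_nonneg _) (hM E₀ ⟨le_rfl, hE₀c.le⟩)
  have hsE₀ : 0 < Real.sqrt E₀ := Real.sqrt_pos.2 hE₀
  set K : ℝ → ℝ → ℝ := fun e u => Real.sqrt ((e - u) / u) * g u with hK
  -- continuity of K e on [E₀, c]
  have hKcont : ∀ e : ℝ, ContinuousOn (K e) (Icc E₀ c) := by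
    intro e
    apply ContinuousOn.mul _ hgc
    apply Real.continuous_sqrt.comp_continuousOn
    exact (continuousOn_const.sub continuousOn_id).div continuousOn_id
      (fun u hu => ne_of_gt (lt_of_lt_of_le hE₀ hu.1))
  have hKint : ∀ e : ℝ, IntervalIntegrable (K e) volume E₀ c := fun e =>
    ((hKcont e).mono (by rw [uIcc_of_le hE₀c.le])).intervalIntegrable
  -- representation: F e = ∫_{E₀}^c K e u du for e ∈ Icc E₀ c
  have hFrep : ∀ e ∈ Icc E₀ c, (∫ u in E₀..e, Real.sqrt ((e - u) / u) * g u)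
      = ∫ u in E₀..c, K e u := by
    intro e he
    have h1 : IntervalIntegrable (K e) volume E₀ e :=
      (hKint e).mono_set
        (by rw [uIcc_of_le hE₀c.le, uIcc_of_le he.1]; exact Icc_subset_Icc le_rfl he.2)
    have h2 : IntervalIntegrable (K e) volume e c :=
      (hKint e).mono_set
        (by rw [uIcc_of_le hE₀c.le, uIcc_of_le he.2]; exact Icc_subset_Icc he.1 le_rfl)
    have h3 : (∫ u in e..c, K e u) = 0 := by
      rw [← intervalIntegral.integral_zero (a := e) (b := c)]
      apply intervalIntegral.integral_congr
      intro u hu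
      rw [uIcc_of_le he.2] at hu
      have hu0 : 0 < u := lt_of_lt_of_le hE₀ (le_trans he.1 hu.1)
      have hnp : (e - u) / u ≤ 0 :=
        div_nonpos_of_nonpos_of_nonneg (by linarith [hu.1]) hu0.le
      simp [hK, Real.sqrt_eq_zero_of_nonpos hnp]
    rw [← intervalIntegral.integral_add_adjacent_intervals h1 h2, h3, add_zero]
  -- limit function
  set L : ℝ → ℝ := fun u => (1/2) * (g u / Real.sqrt (u * (E - u))) with hL
  -- bound function
  set B : ℝ → ℝ := fun u => (M / Real.sqrt E₀) *
      (1 / Real.sqrt (E - u) + 1 / Real.sqrt (u - E)) with hB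
  have hB0 : ∀ u : ℝ, 0 ≤ B u := by
    intro u; rw [hB]; positivity
  have hBint : IntervalIntegrable B volume E₀ c := by
    have h1 : IntervalIntegrable (fun u : ℝ => (E - u) ^ (-(1/2) : ℝ)) volume E₀ c := by
      have := (intervalIntegrable_rpow' (a := E - E₀) (b := E - c)
        (by norm_num : (-1:ℝ) < -(1/2))).comp_sub_left E
      simpa using this
    have h2 : IntervalIntegrable (fun u : ℝ => (u - E) ^ (-(1/2) : ℝ)) volume E₀ c := by
      have := (intervalIntegrable_rpow' (a := E₀ - E) (b := c - E)
        (by norm_num : (-1:ℝ) < -(1/2))).comp_sub_right E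
      simpa using this
    rw [hB]
    simp only [one_div_sqrt_eq_rpow_neg_half]
    exact (h1.add h2).const_mul _
  -- pointwise comparison with the bound
  have hBge : ∀ u : ℝ, u ≠ E → |g u| ≤ M → E₀ ≤ u →
      |g u| / (Real.sqrt u * Real.sqrt |E - u|) ≤ B u := by
    intro u hne hgu hu
    have hu0 : 0 < u := lt_of_lt_of_le hE₀ hu
    have hsu : Real.sqrt E₀ ≤ Real.sqrt u := Real.sqrt_le_sqrt hu
    have habs : 0 < |E - u| := abs_pos.2 (sub_ne_zero.2 (Ne.symm hne))
    have hsabs : 0 < Real.sqrt |E - u| := Real.sqrt_pos.2 habs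
    have key : |g u| / (Real.sqrt u * Real.sqrt |E - u|)
        ≤ (M / Real.sqrt E₀) * (1 / Real.sqrt |E - u|) := by
      rw [mul_one_div, div_div]
      gcongr
    refine key.trans ?_
    have hmono : 1 / Real.sqrt |E - u| ≤ 1 / Real.sqrt (E - u) + 1 / Real.sqrt (u - E) := by
      rcases lt_or_gt_of_ne hne with h | h
      · rw [abs_of_pos (by linarith : (0:ℝ) < E - u)]
        have : (0:ℝ) ≤ 1 / Real.sqrt (u - E) := by positivity
        linarith
      · rw [abs_of_neg (by linarith : E - u < 0), neg_sub]
        have : (0:ℝ) ≤ 1 / Real.sqrt (E - u) := by positivity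
        linarith
    have hcn : 0 ≤ M / Real.sqrt E₀ := by positivity
    rw [hB]
    exact mul_le_mul_of_nonneg_left hmono hcn
  -- main estimate on slopes
  have hslope_bound : ∀ e : ℝ, ∀ u ∈ Ioc E₀ c, u ≠ E → e ≠ E →
      ‖(e - E)⁻¹ * (K e u - K E u)‖ ≤ B u := by
    intro e u hu hne he
    have hu0 : 0 < u := lt_trans hE₀ hu.1
    have hsu : 0 < Real.sqrt u := Real.sqrt_pos.2 hu0
    have hgu : |g u| ≤ M := hM u ⟨hu.1.le, hu.2⟩
    have habs : 0 < |E - u| := abs_pos.2 (sub_ne_zero.2 (Ne.symm hne))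
    have hsabs : 0 < Real.sqrt |E - u| := Real.sqrt_pos.2 habs
    have heabs : 0 < |e - E| := abs_pos.2 (sub_ne_zero.2 he)
    have hd := sqrt_diff_bound (e - u) (E - u) (sub_ne_zero.2 (Ne.symm hne))
    rw [show (e - u) - (E - u) = e - E by ring] at hd
    have hKdiff : K e u - K E u
        = ((Real.sqrt (e - u) - Real.sqrt (E - u)) / Real.sqrt u) * g u := by
      simp only [hK]
      rw [Real.sqrt_div' _ hu0.le, Real.sqrt_div' _ hu0.le]; ring
    calc ‖(e - E)⁻¹ * (K e u - K E u)‖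
        = |Real.sqrt (e - u) - Real.sqrt (E - u)| * |g u| / (Real.sqrt u * |e - E|) := by
          rw [hKdiff, Real.norm_eq_abs, abs_mul, abs_inv, abs_mul, abs_div,
            abs_of_nonneg (Real.sqrt_nonneg u)]
          ring
      _ ≤ (|e - E| / Real.sqrt |E - u|) * |g u| / (Real.sqrt u * |e - E|) := by
          gcongr
      _ = |g u| / (Real.sqrt u * Real.sqrt |E - u|) := by
          field_simp
      _ ≤ B u := hBge u hne hgu hu.1.le
  -- pointwise limit
  have hlim : ∀ u ∈ Ioc E₀ c, u ≠ E →
      Tendsto (fun e => (e - E)⁻¹ * (K e u - K E u)) (𝓝[≠] E) (𝓝 (L u)) := by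
    intro u hu hne
    have hu0 : 0 < u := lt_trans hE₀ hu.1
    rcases lt_or_gt_of_ne hne with h | h
    · -- u < E
      have hx : (0:ℝ) < (E - u) / u := div_pos (by linarith) hu0
      have hd1 : HasDerivAt (fun e : ℝ => (e - u) / u) (1/u) E := by
        simpa [one_div] using ((hasDerivAt_id E).sub_const u).div_const u
      have hd2 : HasDerivAt Real.sqrt (1 / (2 * Real.sqrt ((E - u)/u))) ((E - u)/u) :=
        Real.hasDerivAt_sqrt (ne_of_gt hx)
      have hd3 : HasDerivAt (fun e => Real.sqrt ((e - u)/u))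
          (1 / (2 * Real.sqrt ((E - u)/u)) * (1/u)) E := hd2.comp E hd1
      have hd4 : HasDerivAt (fun e => K e u)
          (1 / (2 * Real.sqrt ((E - u)/u)) * (1/u) * g u) E := by
        simp only [hK]
        exact hd3.mul_const (g u)
      have hsu : 0 < Real.sqrt u := Real.sqrt_pos.2 hu0
      have hsEu : 0 < Real.sqrt (E - u) := Real.sqrt_pos.2 (by linarith)
      have hmsq : Real.sqrt u * Real.sqrt u = u := Real.mul_self_sqrt hu0.le
      have hval : 1 / (2 * Real.sqrt ((E - u)/u)) * (1/u) * g u = L u := by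
        rw [hL]
        simp only
        rw [Real.sqrt_div' _ hu0.le, Real.sqrt_mul hu0.le]
        field_simp
        linear_combination g u * hmsq
      rw [← hval]
      refine (hasDerivAt_iff_tendsto_slope.1 hd4).congr fun e => ?_
      rw [slope_def_field, div_eq_inv_mul]
    · -- E < u
      have hL0 : L u = 0 := by
        rw [hL]
        simp only
        rw [Real.sqrt_eq_zero_of_nonpos (by nlinarith : u * (E - u) ≤ 0), div_zero, mul_zero]
      have hev : (fun e => (e - E)⁻¹ * (K e u - K E u)) =ᶠ[𝓝[≠] E] fun _ => 0 := by
        filter_upwards [mem_nhdsWithin_of_mem_nhds (Iio_mem_nhds h)] with e (he : e < u)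
        have h1 : Real.sqrt ((e - u)/u) = 0 :=
          Real.sqrt_eq_zero_of_nonpos (div_nonpos_of_nonpos_of_nonneg (by linarith) hu0.le)
        have h2 : Real.sqrt ((E - u)/u) = 0 :=
          Real.sqrt_eq_zero_of_nonpos (div_nonpos_of_nonpos_of_nonneg (by linarith) hu0.le)
        simp only [hK]
        rw [h1, h2]
        ring
      rw [hL0]
      exact Tendsto.congr' hev.symm tendsto_const_nhds
  -- a.e. avoidance of the singular point
  have hae : ∀ᵐ u : ℝ ∂volume, u ≠ E := by
    have hsing : (volume : Measure ℝ) {E} = 0 := measure_singleton E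
    rw [ae_iff]
    convert hsing using 2
    ext u; simp
  -- dominated convergence
  have hDCT : Tendsto (fun e => ∫ u in E₀..c, (e - E)⁻¹ * (K e u - K E u)) (𝓝[≠] E)
      (𝓝 (∫ u in E₀..c, L u)) := by
    apply intervalIntegral.tendsto_integral_filter_of_dominated_convergence B
    · filter_upwards with e
      rw [uIoc_of_le hE₀c.le]
      exact ((((hKcont e).mono Ioc_subset_Icc_self).sub
        ((hKcont E).mono Ioc_subset_Icc_self)).aestronglyMeasurable measurableSet_Ioc).const_mul _
    · filter_upwards [self_mem_nhdsWithin] with e (he : e ≠ E)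
      filter_upwards [hae] with u hu hmem
      rw [uIoc_of_le hE₀c.le] at hmem
      exact hslope_bound e u hmem hu he
    · exact hBint
    · filter_upwards [hae] with u hu hmem
      rw [uIoc_of_le hE₀c.le] at hmem
      exact hlim u hmem hu
  -- identify the slope with the integral
  have hEIcc : E ∈ Icc E₀ c := ⟨hE1.le, hEc.le⟩
  have hslope_eq : ∀ᶠ e in 𝓝[≠] E,
      (∫ u in E₀..c, (e - E)⁻¹ * (K e u - K E u))
        = slope (fun e => ∫ u in E₀..e, Real.sqrt ((e - u) / u) * g u) E e := by
    have hmem : Icc E₀ c ∈ 𝓝[≠] E :=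
      mem_nhdsWithin_of_mem_nhds (Icc_mem_nhds hE1 hEc)
    filter_upwards [hmem, self_mem_nhdsWithin] with e he (hne : e ≠ E)
    rw [slope_def_field, div_eq_inv_mul, hFrep e he, hFrep E hEIcc,
      ← intervalIntegral.integral_sub (hKint e) (hKint E),
      ← intervalIntegral.integral_const_mul]
  -- value of the limit integral
  have hLval : (∫ u in E₀..c, L u)
      = (1/2) * ∫ u in E₀..E, g u / Real.sqrt (u * (E - u)) := by
    have hLint : IntervalIntegrable L volume E₀ c := by
      rw [intervalIntegrable_iff, uIoc_of_le hE₀c.le]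
      have hBI : IntegrableOn B (Ioc E₀ c) volume := by
        have := intervalIntegrable_iff.1 hBint
        rwa [uIoc_of_le hE₀c.le] at this
      apply Integrable.mono' hBI
      · have hgm : AEStronglyMeasurable g (volume.restrict (Ioc E₀ c)) :=
          (hgc.mono Ioc_subset_Icc_self).aestronglyMeasurable measurableSet_Ioc
        have hinv : AEStronglyMeasurable (fun u : ℝ => (Real.sqrt (u * (E - u)))⁻¹)
            (volume.restrict (Ioc E₀ c)) :=
          ((Real.continuous_sqrt.comp (continuous_id.mul
            (continuous_const.sub continuous_id))).measurable.inv).aestronglyMeasurable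
        have hms : AEStronglyMeasurable
            (fun u : ℝ => (1/2 : ℝ) * (g u * (Real.sqrt (u * (E - u)))⁻¹))
            (volume.restrict (Ioc E₀ c)) := (hgm.mul hinv).const_mul _
        simpa [hL, div_eq_mul_inv] using hms
      · filter_upwards [ae_restrict_mem measurableSet_Ioc, ae_restrict_of_ae hae] with u hu hne
        have hu0 : 0 < u := lt_trans hE₀ hu.1
        rcases lt_or_gt_of_ne hne with h | h
        · have hsplit : Real.sqrt (u * (E - u)) = Real.sqrt u * Real.sqrt |E - u| := by
            rw [abs_of_pos (by linarith : (0:ℝ) < E - u), Real.sqrt_mul hu0.le]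
          have h1 : ‖L u‖ ≤ |g u| / (Real.sqrt u * Real.sqrt |E - u|) := by
            rw [hL, Real.norm_eq_abs]
            simp only
            rw [abs_mul, abs_div (g u), hsplit,
              abs_of_nonneg (by positivity : (0:ℝ) ≤ Real.sqrt u * Real.sqrt |E - u|),
              show |(1:ℝ)/2| = 1/2 by norm_num]
            have : (0:ℝ) ≤ |g u| / (Real.sqrt u * Real.sqrt |E - u|) := by positivity
            linarith
          exact h1.trans (hBge u hne (hM u ⟨hu.1.le, hu.2⟩) hu.1.le)
        · have hzero : L u = 0 := by
            rw [hL]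
            simp only
            rw [Real.sqrt_eq_zero_of_nonpos (by nlinarith : u * (E - u) ≤ 0),
              div_zero, mul_zero]
          rw [hzero, norm_zero]
          exact hB0 u
    have h1 : IntervalIntegrable L volume E₀ E := hLint.mono_set
      (by rw [uIcc_of_le hE₀c.le, uIcc_of_le hE1.le]; exact Icc_subset_Icc le_rfl hEc.le)
    have h2 : IntervalIntegrable L volume E c := hLint.mono_set
      (by rw [uIcc_of_le hE₀c.le, uIcc_of_le hEc.le]; exact Icc_subset_Icc hE1.le le_rfl)
    have h3 : (∫ u in E..c, L u) = 0 := by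
      rw [← intervalIntegral.integral_zero (a := E) (b := c)]
      apply intervalIntegral.integral_congr
      intro u hu
      rw [uIcc_of_le hEc.le] at hu
      have hu0 : 0 < u := lt_of_lt_of_le (lt_trans hE₀ hE1) hu.1
      rw [hL]
      simp only
      rw [Real.sqrt_eq_zero_of_nonpos
        (mul_nonpos_of_nonneg_of_nonpos hu0.le (by linarith [hu.1])), div_zero, mul_zero]
    rw [← intervalIntegral.integral_add_adjacent_intervals h1 h2, h3, add_zero, hL,
      intervalIntegral.integral_const_mul]
  rw [hasDerivAt_iff_tendsto_slope, ← hLval]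
  exact hDCT.congr' hslope_eq
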